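/- For the cylindrical pairing Par(A, B) of subsets A, B ⊆ ℤ_n (particles of B paired weakly to the right onto A), the number of matched pairs equals |A| + |B| minus the number of unpaired brackets, and the σ_1 exchange of unmatched particles produces sets A', B' with |A'| = |B| and |B'| = |A| (cardinalities are swapped), while A ∩ B ⊆ A' ∩ B' holds for the paired positions: any site in both A and B remains matched and in both rows after σ_1. -/

import Mathlib

/-- Linear bracket-matching pass.  Tokens are `(site, isOpen)`.  The second argument is the
stack of currently unmatched open brackets (most recent first), the third accumulates the
linearly unmatched closed brackets (most recent first). -/
def pairProcess {α : Type} : List (α × Bool) → List α → List α → List α × List α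
  | [], opens, closes => (opens, closes)
  | (a, true) :: ts, opens, closes => pairProcess ts (a :: opens) closes
  | (a, false) :: ts, [], closes => pairProcess ts [] (a :: closes)
  | (_, false) :: ts, _ :: opens, closes => pairProcess ts opens closes

/-- The token list of `Par(A,B)`: scanning sites `j = 1, …, n` in order, record an open
bracket for `j ∈ B` (the row above) and then a closed bracket for `j ∈ A` (the row below). -/
def parTokens {n : ℕ} (A B : Finset (Fin n)) : List (Fin n × Bool) :=
  (List.finRange n).flatMap
    (fun j => (if j ∈ B then [(j, true)] else []) ++ (if j ∈ A then [(j, false)] else []))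

/-- Result of the linear pass on `Par(A,B)`. -/
def parRes {n : ℕ} (A B : Finset (Fin n)) : List (Fin n) × List (Fin n) :=
  pairProcess (parTokens A B) [] []

/-- The set of cylindrically unpaired particles of `B` (open brackets) in `Par(A,B)`:
after the linear pass, the cyclic rule additionally matches `min` many remaining opens
and closes, leaving the earliest surplus opens unmatched. -/
def unmatchedOpen {n : ℕ} (A B : Finset (Fin n)) : Finset (Fin n) :=
  ((parRes A B).1.drop (parRes A B).2.length).toFinset

/-- The set of cylindrically unpaired particles of `A` (closed brackets) in `Par(A,B)`. -/
def unmatchedClose {n : ℕ} (A B : Finset (Fin n)) : Finset (Fin n) :=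
  ((parRes A B).2.take ((parRes A B).2.length - (parRes A B).1.length)).toFinset

/-- The row-swapping involution on a pair of rows `(A, B)` (`A` below, `B` above):
all cylindrically unmatched entries of `Par(A,B)` are exchanged between the two rows. -/
def sigmaPair {n : ℕ} (A B : Finset (Fin n)) : Finset (Fin n) × Finset (Fin n) :=
  ((A \ unmatchedClose A B) ∪ unmatchedOpen A B,
   (B \ unmatchedOpen A B) ∪ unmatchedClose A B)

/-- The involution `σ_i` acting on rows `i` and `i+1` of a multiline queue. -/
def sigmaRow {n : ℕ} (i : ℕ) (Q : ℕ → Finset (Fin n)) : ℕ → Finset (Fin n) :=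
  fun j =>
    if j = i then (sigmaPair (Q i) (Q (i + 1))).1
    else if j = i + 1 then (sigmaPair (Q i) (Q (i + 1))).2
    else Q j

section Aux

lemma pairProcess_length {α : Type} : ∀ (ts : List (α × Bool)) (o c : List α),
    (pairProcess ts o c).1.length + c.length + ts.countP (fun t => !t.2)
      = (pairProcess ts o c).2.length + o.length + ts.countP (fun t => t.2)
  | [], o, c => by simp [pairProcess]; omega
  | (a, true) :: ts, o, c => by
      have := pairProcess_length ts (a :: o) c
      simp [pairProcess, List.countP_cons] at *
      omega
  | (a, false) :: ts, [], c => by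
      have := pairProcess_length ts [] (a :: c)
      simp [pairProcess, List.countP_cons] at *
      omega
  | (a, false) :: ts, x :: o, c => by
      have := pairProcess_length ts o c
      simp [pairProcess, List.countP_cons] at *
      omega

/-- Token contribution of a single site. -/
def tok {n : ℕ} (A B : Finset (Fin n)) (j : Fin n) : List (Fin n × Bool) :=
  (if j ∈ B then [(j, true)] else []) ++ (if j ∈ A then [(j, false)] else [])

lemma parTokens_eq {n : ℕ} (A B : Finset (Fin n)) :
    parTokens A B = (List.finRange n).flatMap (tok A B) := rfl

lemma tok_countT {n : ℕ} (A B : Finset (Fin n)) : ∀ L : List (Fin n),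
    (L.flatMap (tok A B)).countP (fun t => t.2) = L.countP (· ∈ B)
  | [] => by simp
  | j :: L => by
      simp only [List.flatMap_cons, List.countP_append, List.countP_cons, tok,
        tok_countT A B L]
      by_cases hB : j ∈ B <;> by_cases hA : j ∈ A <;> simp [hA, hB] <;> omega

lemma tok_countF {n : ℕ} (A B : Finset (Fin n)) : ∀ L : List (Fin n),
    (L.flatMap (tok A B)).countP (fun t => !t.2) = L.countP (· ∈ A)
  | [] => by simp
  | j :: L => by
      simp only [List.flatMap_cons, List.countP_append, List.countP_cons, tok,
        tok_countF A B L]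
      by_cases hB : j ∈ B <;> by_cases hA : j ∈ A <;> simp [hA, hB] <;> omega

lemma finRange_countP {n : ℕ} (S : Finset (Fin n)) :
    (List.finRange n).countP (· ∈ S) = S.card := by
  rw [List.countP_eq_length_filter]
  have hnd : ((List.finRange n).filter (· ∈ S)).Nodup :=
    (List.nodup_finRange n).filter _
  have hts : ((List.finRange n).filter (· ∈ S)).toFinset = S := by
    ext x; simp [List.mem_filter]
  rw [← List.toFinset_card_of_nodup hnd, hts]

lemma parKey {n : ℕ} (A B : Finset (Fin n)) :
    ∀ (L : List (Fin n)), L.Nodup → ∀ (o c : List (Fin n)),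
      o.Nodup → c.Nodup →
      (∀ x ∈ o, x ∈ B ∧ x ∉ A ∧ x ∉ L) →
      (∀ x ∈ c, x ∈ A ∧ x ∉ B ∧ x ∉ L) →
      (pairProcess (L.flatMap (tok A B)) o c).1.Nodup ∧
      (pairProcess (L.flatMap (tok A B)) o c).2.Nodup ∧
      (∀ x ∈ (pairProcess (L.flatMap (tok A B)) o c).1, x ∈ B ∧ x ∉ A) ∧
      (∀ x ∈ (pairProcess (L.flatMap (tok A B)) o c).2, x ∈ A ∧ x ∉ B) := by
  intro L
  induction L with
  | nil =>
      intro _ o c ho hc hoP hcP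
      simp only [List.flatMap_nil, pairProcess]
      exact ⟨ho, hc, fun x hx => ⟨(hoP x hx).1, (hoP x hx).2.1⟩,
        fun x hx => ⟨(hcP x hx).1, (hcP x hx).2.1⟩⟩
  | cons j L ih =>
      intro hnd o c ho hc hoP hcP
      have hjL : j ∉ L := (List.nodup_cons.mp hnd).1
      have hndL : L.Nodup := (List.nodup_cons.mp hnd).2
      simp only [List.flatMap_cons, tok]
      by_cases hB : j ∈ B <;> by_cases hA : j ∈ A
      · -- both: open then close, cancels
        simp only [hB, hA, if_pos, List.cons_append, List.nil_append,
          List.singleton_append, pairProcess]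
        exact ih hndL o c ho hc
          (fun x hx => ⟨(hoP x hx).1, (hoP x hx).2.1,
            fun h => (hoP x hx).2.2 (List.mem_cons_of_mem _ h)⟩)
          (fun x hx => ⟨(hcP x hx).1, (hcP x hx).2.1,
            fun h => (hcP x hx).2.2 (List.mem_cons_of_mem _ h)⟩)
      · -- only in B: push
        simp only [hB, hA, if_pos, if_neg, List.append_nil, List.singleton_append,
          pairProcess]
        refine ih hndL (j :: o) c ?_ hc ?_
          (fun x hx => ⟨(hcP x hx).1, (hcP x hx).2.1,
            fun h => (hcP x hx).2.2 (List.mem_cons_of_mem _ h)⟩)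
        · exact List.nodup_cons.mpr ⟨fun h => (hoP j h).2.2 (List.mem_cons_self), ho⟩
        · intro x hx
          rcases List.mem_cons.mp hx with rfl | hx
          · exact ⟨hB, hA, hjL⟩
          · exact ⟨(hoP x hx).1, (hoP x hx).2.1,
              fun h => (hoP x hx).2.2 (List.mem_cons_of_mem _ h)⟩
      · -- only in A: close
        simp only [hB, hA, if_pos, if_neg, if_false, List.nil_append, List.singleton_append]
        match o, ho, hoP with
        | [], _, _ =>
            simp only [pairProcess]
            refine ih hndL [] (j :: c) (List.nodup_nil) ?_ (by simp) ?_
            · exact List.nodup_cons.mpr ⟨fun h => (hcP j h).2.2 (List.mem_cons_self), hc⟩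
            · intro x hx
              rcases List.mem_cons.mp hx with rfl | hx
              · exact ⟨hA, hB, hjL⟩
              · exact ⟨(hcP x hx).1, (hcP x hx).2.1,
                  fun h => (hcP x hx).2.2 (List.mem_cons_of_mem _ h)⟩
        | y :: o, ho, hoP =>
            simp only [pairProcess]
            exact ih hndL o c (List.nodup_cons.mp ho).2 hc
              (fun x hx => ⟨(hoP x (List.mem_cons_of_mem _ hx)).1,
                (hoP x (List.mem_cons_of_mem _ hx)).2.1,
                fun h => (hoP x (List.mem_cons_of_mem _ hx)).2.2
                  (List.mem_cons_of_mem _ h)⟩)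
              (fun x hx => ⟨(hcP x hx).1, (hcP x hx).2.1,
                fun h => (hcP x hx).2.2 (List.mem_cons_of_mem _ h)⟩)
      · -- neither
        simp only [hB, hA, if_neg, List.nil_append]
        exact ih hndL o c ho hc
          (fun x hx => ⟨(hoP x hx).1, (hoP x hx).2.1,
            fun h => (hoP x hx).2.2 (List.mem_cons_of_mem _ h)⟩)
          (fun x hx => ⟨(hcP x hx).1, (hcP x hx).2.1,
            fun h => (hcP x hx).2.2 (List.mem_cons_of_mem _ h)⟩)

end Aux

/-- for the cylindrical pairing `Par(A,B)` of `A, B ⊆ ℤ_n`, the number of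
matched brackets equals `|A| + |B|` minus the number of unpaired brackets; the exchange
`σ_1` of unmatched particles produces rows `A', B'` with `|A'| = |B|` and `|B'| = |A|`;
and every site lying in both `A` and `B` self-pairs and stays in both rows:
`A ∩ B ⊆ A' ∩ B'`. -/
theorem sigmaPair_card_swap (n : ℕ) (A B : Finset (Fin n)) :
    (A \ unmatchedClose A B).card + (B \ unmatchedOpen A B).card
        = (A.card + B.card) - ((unmatchedClose A B).card + (unmatchedOpen A B).card) ∧
    (sigmaPair A B).1.card = B.card ∧
    (sigmaPair A B).2.card = A.card ∧
    A ∩ B ⊆ (sigmaPair A B).1 ∩ (sigmaPair A B).2 := by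
  classical
  set O := (parRes A B).1 with hO
  set C := (parRes A B).2 with hC
  -- length balance
  have hlen : O.length + A.card = C.length + B.card := by
    have h := pairProcess_length (parTokens A B) [] []
    rw [parTokens_eq] at h
    rw [tok_countT, tok_countF, finRange_countP, finRange_countP] at h
    simp only [List.length_nil, add_zero] at h
    exact h
  -- structural facts
  have hkey := parKey A B (List.finRange n) (List.nodup_finRange n) [] []
    List.nodup_nil List.nodup_nil (by simp) (by simp)
  have hOnd : O.Nodup := by exact hkey.1
  have hCnd : C.Nodup := by exact hkey.2.1
  have hOmem : ∀ x ∈ O, x ∈ B ∧ x ∉ A := by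
    exact hkey.2.2.1
  have hCmem : ∀ x ∈ C, x ∈ A ∧ x ∉ B := by
    exact hkey.2.2.2
  -- cards of unmatched sets
  have huO_card : (unmatchedOpen A B).card = O.length - C.length := by
    rw [unmatchedOpen, List.toFinset_card_of_nodup
      ((List.drop_sublist _ _).nodup hOnd)]
    simp [← hO, ← hC]
  have huC_card : (unmatchedClose A B).card = C.length - O.length := by
    rw [unmatchedClose, List.toFinset_card_of_nodup
      ((List.take_sublist _ _).nodup hCnd)]
    simp only [← hO, ← hC, List.length_take]
    omega
  -- memberships
  have huO : ∀ x ∈ unmatchedOpen A B, x ∈ B ∧ x ∉ A := by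
    intro x hx
    rw [unmatchedOpen, List.mem_toFinset] at hx
    exact hOmem x (List.mem_of_mem_drop hx)
  have huC : ∀ x ∈ unmatchedClose A B, x ∈ A ∧ x ∉ B := by
    intro x hx
    rw [unmatchedClose, List.mem_toFinset] at hx
    exact hCmem x (List.mem_of_mem_take hx)
  have huCA : unmatchedClose A B ⊆ A := fun x hx => (huC x hx).1
  have huOB : unmatchedOpen A B ⊆ B := fun x hx => (huO x hx).1
  have h1 : (A \ unmatchedClose A B).card = A.card - (unmatchedClose A B).card :=
    Finset.card_sdiff_of_subset huCA
  have h2 : (B \ unmatchedOpen A B).card = B.card - (unmatchedOpen A B).card :=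
    Finset.card_sdiff_of_subset huOB
  have hle1 : (unmatchedClose A B).card ≤ A.card := Finset.card_le_card huCA
  have hle2 : (unmatchedOpen A B).card ≤ B.card := Finset.card_le_card huOB
  -- disjointness for unions
  have hd1 : Disjoint (A \ unmatchedClose A B) (unmatchedOpen A B) := by
    rw [Finset.disjoint_left]
    intro x hx hx'
    exact (huO x hx').2 (Finset.mem_sdiff.mp hx).1
  have hd2 : Disjoint (B \ unmatchedOpen A B) (unmatchedClose A B) := by
    rw [Finset.disjoint_left]
    intro x hx hx'
    exact (huC x hx').2 (Finset.mem_sdiff.mp hx).1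
  refine ⟨by omega, ?_, ?_, ?_⟩
  · show ((A \ unmatchedClose A B) ∪ unmatchedOpen A B).card = B.card
    rw [Finset.card_union_of_disjoint hd1, h1]
    omega
  · show ((B \ unmatchedOpen A B) ∪ unmatchedClose A B).card = A.card
    rw [Finset.card_union_of_disjoint hd2, h2]
    omega
  · intro x hx
    rw [Finset.mem_inter] at hx
    have hx1 : x ∉ unmatchedClose A B := fun h => (huC x h).2 hx.2
    have hx2 : x ∉ unmatchedOpen A B := fun h => (huO x h).2 hx.1
    simp only [sigmaPair, Finset.mem_inter, Finset.mem_union, Finset.mem_sdiff]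
    exact ⟨Or.inl ⟨hx.1, hx1⟩, Or.inl ⟨hx.2, hx2⟩⟩
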